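/- Let f ∈ F_θ(Σ_A⁺) be real-valued and let λ = λ_f, ν = ν_f, h = h_f be as in the Ruelle–Perron–Frobenius theorem (L_f h = λ h, L_f* ν = λ ν, ∫ h dν = 1, h > 0). Then min h ≥ 1 / ( e^{2 b_f/(1−θ)} · s₀^M · e^{2M |f|_∞} ), where b_f = max{1, |f|_θ}. -/

import Mathlib

open MeasureTheory Real ENNReal

namespace SFT

/-- The one-sided subshift of finite type determined by the 0-1 matrix `A`. -/
def Space {s₀ : ℕ} (A : Matrix (Fin s₀) (Fin s₀) ℕ) : Type :=
  {ξ : ℕ → Fin s₀ // ∀ i, A (ξ i) (ξ (i + 1)) = 1}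

variable {s₀ : ℕ} {A : Matrix (Fin s₀) (Fin s₀) ℕ}

instance : TopologicalSpace (Space A) :=
  inferInstanceAs (TopologicalSpace {ξ : ℕ → Fin s₀ // ∀ i, A (ξ i) (ξ (i + 1)) = 1})

noncomputable instance : MeasurableSpace (Space A) := borel _
instance : BorelSpace (Space A) := ⟨rfl⟩

/-- The shift map σ. -/
def shift (x : Space A) : Space A := ⟨fun i => x.1 (i + 1), fun i => x.2 (i + 1)⟩

/-- `var_k g` as an extended real. -/
noncomputable def evar (g : Space A → ℝ) (k : ℕ) : ℝ≥0∞ :=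
  ⨆ (ξ : Space A) (η : Space A) (_ : ∀ i ≤ k, ξ.1 i = η.1 i), ENNReal.ofReal |g ξ - g η|

/-- `|g|_θ` as an extended real. -/
noncomputable def eHolder (θ : ℝ) (g : Space A → ℝ) : ℝ≥0∞ :=
  ⨆ k : ℕ, evar g k / ENNReal.ofReal (θ ^ k)

/-- `|g|_∞` as an extended real. -/
noncomputable def eSup (g : Space A → ℝ) : ℝ≥0∞ :=
  ⨆ ξ : Space A, ENNReal.ofReal |g ξ|

/-- `|g|_θ`. -/
noncomputable def holderNorm (θ : ℝ) (g : Space A → ℝ) : ℝ := (eHolder θ g).toReal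

/-- `|g|_∞`. -/
noncomputable def supNorm (g : Space A → ℝ) : ℝ := (eSup g).toReal

/-- `‖g‖_θ = |g|_θ + |g|_∞`. -/
noncomputable def fNorm (θ : ℝ) (g : Space A → ℝ) : ℝ := holderNorm θ g + supNorm g

/-- Membership in `F_θ(Σ_A⁺)`: finiteness of `‖g‖_θ`. -/
def MemF (θ : ℝ) (g : Space A → ℝ) : Prop := eHolder θ g + eSup g < ⊤


instance shiftFiberFinite (x : Space A) : Finite {y : Space A // shift y = x} := by
  apply Finite.of_injective (fun y : {y : Space A // shift y = x} => y.1.1 0)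
  rintro ⟨y, hy⟩ ⟨z, hz⟩ h
  apply Subtype.ext
  apply Subtype.ext
  funext n
  cases n with
  | zero => exact h
  | succ i =>
    have h1 : y.1 (i + 1) = x.1 i := congrFun (congrArg Subtype.val hy) i
    have h2 : z.1 (i + 1) = x.1 i := congrFun (congrArg Subtype.val hz) i
    rw [h1, h2]

/-- The Ruelle transfer operator `(L_f g)(x) = Σ_{σ y = x} e^{f(y)} g(y)`. -/
noncomputable def transfer (f g : Space A → ℝ) (x : Space A) : ℝ :=
  ∑' y : {y : Space A // shift y = x}, Real.exp (f y.1) * g y.1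

/-- Two functions are cohomologous if they differ by a continuous coboundary. -/
def Cohomologous (u v : Space A → ℝ) : Prop :=
  ∃ w : Space A → ℝ, Continuous w ∧ ∀ x, u x = v x + w (shift x) - w x

/-- ψ is cohomologous to a constant. -/
def CohomToConst (ψ : Space A → ℝ) : Prop := ∃ c : ℝ, Cohomologous ψ fun _ => c

/-- A finite measurable partition of the space. -/
def IsPartition {k : ℕ} (P : Fin k → Set (Space A)) : Prop :=
  (∀ i, MeasurableSet (P i)) ∧ (Pairwise fun i j => Disjoint (P i) (P j)) ∧
    (⋃ i, P i) = Set.univ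

/-- Entropy of the n-th join `⋁_{j<n} σ^{-j} P` of a partition. -/
noncomputable def joinEntropy (m : Measure (Space A)) {k : ℕ} (P : Fin k → Set (Space A))
    (n : ℕ) : ℝ :=
  ∑ a : Fin n → Fin k,
    Real.negMulLog (m (⋂ j : Fin n, shift^[(j : ℕ)] ⁻¹' P (a j))).toReal

/-- Measure-theoretic (Kolmogorov–Sinai) entropy of `m` with respect to the shift. -/
noncomputable def entropy (m : Measure (Space A)) : ℝ :=
  sSup {h | ∃ k : ℕ, ∃ P : Fin k → Set (Space A), IsPartition P ∧
    h = ⨅ n : ℕ, joinEntropy m P (n + 1) / (n + 1)}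

/-- σ-invariance of a measure. -/
def IsInvariant (m : Measure (Space A)) : Prop := m.map shift = m

/-- Topological pressure via the variational principle. -/
noncomputable def pressure (g : Space A → ℝ) : ℝ :=
  sSup {r | ∃ m : Measure (Space A), IsProbabilityMeasure m ∧ IsInvariant m ∧
    r = entropy m + ∫ x, g x ∂m}

/-- `m` is an equilibrium state of `g`. -/
def IsEqm (g : Space A → ℝ) (m : Measure (Space A)) : Prop :=
  IsProbabilityMeasure m ∧ IsInvariant m ∧ entropy m + ∫ x, g x ∂m = pressure g

/-- The Ruelle–Perron–Frobenius data of `f`: an eigenvalue `lam > 0`, a probability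
eigenmeasure `ν` of the dual operator, and a positive normalised eigenfunction `h ∈ F_θ`. -/
def IsRPF (θ : ℝ) (f : Space A → ℝ) (lam : ℝ) (ν : Measure (Space A))
    (h : Space A → ℝ) : Prop :=
  0 < lam ∧ IsProbabilityMeasure ν ∧
    (∀ g : Space A → ℝ, Continuous g → ∫ x, transfer f g x ∂ν = lam * ∫ x, g x ∂ν) ∧
    MemF θ h ∧ (∀ x, 0 < h x) ∧ (∀ x, transfer f h x = lam * h x) ∧ (∫ x, h x ∂ν) = 1

variable {s₀ : ℕ} {A : Matrix (Fin s₀) (Fin s₀) ℕ}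

lemma continuous_coord (i : ℕ) : Continuous (fun x : Space A => x.1 i) :=
  (continuous_apply i).comp continuous_subtype_val

instance : CompactSpace (Space A) := by
  have hc : IsClosed {ξ : ℕ → Fin s₀ | ∀ i, A (ξ i) (ξ (i + 1)) = 1} := by
    rw [Set.setOf_forall]
    refine isClosed_iInter fun i => ?_
    have : Continuous (fun ξ : ℕ → Fin s₀ => (ξ i, ξ (i + 1))) :=
      (continuous_apply i).prodMk (continuous_apply (i + 1))
    exact IsClosed.preimage this (isClosed_discrete {p : Fin s₀ × Fin s₀ | A p.1 p.2 = 1})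
  exact isCompact_iff_compactSpace.mp hc.isCompact

lemma shift_iterate (y : Space A) (n i : ℕ) : (shift^[n] y).1 i = y.1 (i + n) := by
  induction n generalizing i with
  | zero => rfl
  | succ n ih =>
    rw [Function.iterate_succ', Function.comp_apply]
    show ((shift^[n] y).1 (i+1) : Fin s₀) = y.1 (i + (n+1))
    rw [ih]
    exact congrArg y.1 (by omega)

lemma abs_le_supNorm {g : Space A → ℝ} (hg : MemF θ g) (ξ : Space A) : |g ξ| ≤ supNorm g := by
  have hfin : eSup g ≠ ⊤ := fun h => by simp [MemF, h] at hg
  have : ENNReal.ofReal |g ξ| ≤ eSup g := le_iSup (fun ξ => ENNReal.ofReal |g ξ|) ξ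
  have := ENNReal.toReal_mono hfin this
  rwa [ENNReal.toReal_ofReal (abs_nonneg _)] at this

lemma var_le_holderNorm (hθ0 : 0 < θ) {g : Space A → ℝ} (hg : MemF θ g) {k : ℕ}
    {ξ η : Space A} (hk : ∀ i ≤ k, ξ.1 i = η.1 i) :
    |g ξ - g η| ≤ holderNorm θ g * θ ^ k := by
  have hfin : eHolder θ g ≠ ⊤ := fun h => by simp [MemF, h] at hg
  have h1 : ENNReal.ofReal |g ξ - g η| ≤ evar g k := by
    refine le_trans ?_ (le_iSup _ ξ)
    refine le_trans ?_ (le_iSup _ η)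
    exact le_iSup (fun _ : ∀ i ≤ k, ξ.1 i = η.1 i => ENNReal.ofReal |g ξ - g η|) hk
  have h2 : evar g k / ENNReal.ofReal (θ ^ k) ≤ eHolder θ g := le_iSup (fun k => evar g k / ENNReal.ofReal (θ ^ k)) k
  have hθk : ENNReal.ofReal (θ ^ k) ≠ 0 := by
    simp [ENNReal.ofReal_eq_zero, not_le, pow_pos hθ0]
  have h3 : evar g k ≤ eHolder θ g * ENNReal.ofReal (θ ^ k) :=
    (ENNReal.div_le_iff hθk ENNReal.ofReal_ne_top).mp h2
  have h4 := ENNReal.toReal_mono (by finiteness) (h1.trans h3)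
  rwa [ENNReal.toReal_ofReal (abs_nonneg _), ENNReal.toReal_mul,
    ENNReal.toReal_ofReal (pow_pos hθ0 k).le] at h4

lemma continuous_of_memF (hθ0 : 0 < θ) (hθ1 : θ < 1) {g : Space A → ℝ} (hg : MemF θ g) :
    Continuous g := by
  rw [continuous_iff_continuousAt]
  intro ξ
  rw [ContinuousAt, Metric.tendsto_nhds]
  intro ε hε
  obtain ⟨k, hk⟩ : ∃ k : ℕ, holderNorm θ g * θ ^ k < ε := by
    rcases le_or_gt (holderNorm θ g) 0 with hC | hC
    · exact ⟨0, lt_of_le_of_lt (mul_nonpos_iff.mpr (Or.inr ⟨hC, by positivity⟩)) hε⟩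
    · obtain ⟨k, hk⟩ := exists_pow_lt_of_lt_one (div_pos hε hC) hθ1
      exact ⟨k, by rwa [mul_comm, ← lt_div_iff₀ hC]⟩
  have hopen : IsOpen {η : Space A | ∀ i ≤ k, η.1 i = ξ.1 i} := by
    have heq : {η : Space A | ∀ i ≤ k, η.1 i = ξ.1 i}
        = ⋂ i ∈ Finset.Iic k, {η : Space A | η.1 i = ξ.1 i} := by
      ext η; simp
    rw [heq]
    exact isOpen_biInter_finset fun i _ =>
      (continuous_coord i).isOpen_preimage {ξ.1 i} (isOpen_discrete _)
  have hmem : {η : Space A | ∀ i ≤ k, η.1 i = ξ.1 i} ∈ nhds ξ :=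
    hopen.mem_nhds (fun i _ => rfl)
  refine Filter.eventually_of_mem hmem fun η hη => ?_
  rw [Real.dist_eq]
  exact lt_of_le_of_lt (var_le_holderNorm hθ0 hg hη) hk

lemma exists_path (h01 : ∀ i j, A i j = 0 ∨ A i j = 1) {n : ℕ} {a b : Fin s₀}
    (hpos : 0 < (A ^ n) a b) :
    ∃ v : ℕ → Fin s₀, v 0 = a ∧ v n = b ∧ ∀ i < n, A (v i) (v (i + 1)) = 1 := by
  induction n generalizing b with
  | zero =>
    refine ⟨fun _ => a, rfl, ?_, by omega⟩
    rw [pow_zero, Matrix.one_apply] at hpos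
    by_contra hab
    rw [if_neg hab] at hpos; exact lt_irrefl 0 hpos
  | succ n ih =>
    rw [pow_succ, Matrix.mul_apply] at hpos
    obtain ⟨c, hc⟩ : ∃ c, 0 < (A ^ n) a c * A c b := by
      by_contra hc
      push_neg at hc
      have : ∀ c, (A ^ n) a c * A c b = 0 := fun c => Nat.le_zero.mp (hc c)
      simp [this] at hpos
    have h1 : 0 < (A ^ n) a c := Nat.pos_of_mul_pos_left (by rwa [Nat.mul_comm] at hc)
    have h2 : A c b = 1 := (h01 c b).resolve_left (Nat.pos_of_mul_pos_left (by rwa [Nat.mul_comm] at hc)).ne'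
    obtain ⟨v, hv0, hvn, hve⟩ := ih h1
    refine ⟨fun i => if i = n + 1 then b else v i, by simp [hv0], by simp, fun i hi => ?_⟩
    rcases Nat.lt_or_ge i n with h | h
    · simp only
      rw [if_neg (by omega : ¬ i = n+1), if_neg (by omega : ¬ i+1 = n+1)]
      exact hve i h
    · have hin : i = n := by omega
      subst hin
      show A (if i = i + 1 then b else v i) (if i + 1 = i + 1 then b else v (i + 1)) = 1
      rw [if_neg (by omega : ¬ i = i + 1), if_pos rfl, hvn]
      exact h2

lemma space_nonempty (h01 : ∀ i j, A i j = 0 ∨ A i j = 1) {M : ℕ} (hM : 0 < M)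
    (hap : ∀ i j, 0 < (A ^ M) i j) (hs₀ : 2 ≤ s₀) : Nonempty (Space A) := by
  have hsucc : ∀ a : Fin s₀, ∃ c, A a c = 1 := by
    intro a
    obtain ⟨v, hv0, _, hve⟩ := exists_path h01 (hap a a)
    exact ⟨v 1, by rw [← hv0]; exact hve 0 hM⟩
  let nxt : Fin s₀ → Fin s₀ := fun a => (hsucc a).choose
  refine ⟨⟨fun n => nxt^[n] ⟨0, by omega⟩, fun i => ?_⟩⟩
  show A (nxt^[i] _) (nxt^[i+1] _) = 1
  rw [Function.iterate_succ', Function.comp_apply]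
  exact (hsucc _).choose_spec

instance shiftIterFiberFinite (n : ℕ) (x : Space A) : Finite {y : Space A // shift^[n] y = x} := by
  apply Finite.of_injective (fun y : {y : Space A // shift^[n] y = x} => fun i : Fin n => y.1.1 i)
  rintro ⟨y, hy⟩ ⟨z, hz⟩ h
  apply Subtype.ext; apply Subtype.ext; funext i
  rcases Nat.lt_or_ge i n with hi | hi
  · exact congrFun h ⟨i, hi⟩
  · have h1 : y.1 (i - n + n) = x.1 (i - n) := by rw [← shift_iterate]; rw [hy]
    have h2 : z.1 (i - n + n) = x.1 (i - n) := by rw [← shift_iterate]; rw [hz]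
    have he : i - n + n = i := by omega
    rw [he] at h1 h2
    rw [h1, h2]

/-- Birkhoff sum. -/
noncomputable def birk (f : Space A → ℝ) (n : ℕ) (y : Space A) : ℝ :=
  ∑ j ∈ Finset.range n, f (shift^[j] y)

lemma sigma_fib_ext {n : ℕ} {x : Space A}
    {p q : Σ y : {y : Space A // shift y = x}, {w : Space A // shift^[n] w = y.1}}
    (hpq : p.2.1 = q.2.1) : p = q := by
  obtain ⟨⟨y, hy⟩, w, hw⟩ := p
  obtain ⟨⟨y', hy'⟩, w', hw'⟩ := q
  simp only at hpq hw hw'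
  subst hpq
  subst hw
  subst hw'
  rfl

lemma transfer_iterate {f h : Space A → ℝ} {lam : ℝ}
    (heig : ∀ x, transfer f h x = lam * h x) :
    ∀ (n : ℕ) (x : Space A),
      lam ^ n * h x
        = ∑' y : {y : Space A // shift^[n] y = x}, Real.exp (birk f n y.1) * h y.1 := by
  intro n
  induction n with
  | zero =>
    intro x
    haveI : Unique {y : Space A // shift^[0] y = x} :=
      ⟨⟨⟨x, rfl⟩⟩, fun y => Subtype.ext y.2⟩
    have hd : x = ((default : {y : Space A // shift^[0] y = x}) : Space A) :=
      congrArg Subtype.val (Unique.eq_default (⟨x, rfl⟩ : {y : Space A // shift^[0] y = x}))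
    rw [tsum_eq_single default (fun b hb => absurd (Unique.eq_default b) hb), ← hd]
    simp [birk]
  | succ n ih =>
    intro x
    haveI := Fintype.ofFinite {y : Space A // shift y = x}
    haveI : ∀ y : Space A, Fintype {w : Space A // shift^[n] w = y} :=
      fun y => Fintype.ofFinite _
    haveI := Fintype.ofFinite {w : Space A // shift^[n+1] w = x}
    have step : lam * h x = ∑ y : {y : Space A // shift y = x}, Real.exp (f y.1) * h y.1 := by
      rw [← heig x, transfer, tsum_eq_sum (s := Finset.univ) (by simp)]
    let e : (Σ y : {y : Space A // shift y = x}, {w : Space A // shift^[n] w = y.1}) ≃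
        {w : Space A // shift^[n+1] w = x} :=
      { toFun := fun p => ⟨p.2.1, by
          rw [Function.iterate_succ', Function.comp_apply, p.2.2, p.1.2]⟩
        invFun := fun w => ⟨⟨shift^[n] w.1, by
            rw [← Function.comp_apply (f := shift), ← Function.iterate_succ', w.2]⟩,
          ⟨w.1, rfl⟩⟩
        left_inv := fun p => sigma_fib_ext rfl
        right_inv := fun w => rfl }
    rw [tsum_eq_sum (s := Finset.univ) (by intro b hb; exact absurd (Finset.mem_univ b) hb)]
    calc lam ^ (n+1) * h x = lam ^ n * (lam * h x) := by ring
      _ = ∑ y : {y : Space A // shift y = x}, Real.exp (f y.1) * (lam ^ n * h y.1) := by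
          rw [step, Finset.mul_sum]
          exact Finset.sum_congr rfl fun y _ => by ring
      _ = ∑ y : {y : Space A // shift y = x}, ∑ w : {w : Space A // shift^[n] w = y.1},
            Real.exp (f y.1) * (Real.exp (birk f n w.1) * h w.1) := by
          refine Finset.sum_congr rfl fun y _ => ?_
          rw [ih y.1, tsum_eq_sum (s := Finset.univ) (by simp), Finset.mul_sum]
      _ = ∑ p : (Σ y : {y : Space A // shift y = x}, {w : Space A // shift^[n] w = y.1}),
            Real.exp (f p.1.1) * (Real.exp (birk f n p.2.1) * h p.2.1) := by
          rw [← Finset.univ_sigma_univ, Finset.sum_sigma]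
      _ = ∑ w : {w : Space A // shift^[n+1] w = x}, Real.exp (birk f (n+1) w.1) * h w.1 := by
          refine Fintype.sum_equiv e _ _ fun p => ?_
          have he : (e p).1 = p.2.1 := rfl
          have hb : birk f (n+1) p.2.1 = birk f n p.2.1 + f p.1.1 := by
            rw [birk, birk, Finset.sum_range_succ, p.2.2]
          rw [he, hb, Real.exp_add]
          ring

lemma exists_image (h01 : ∀ i j, A i j = 0 ∨ A i j = 1) {M : ℕ} (hM : 0 < M)
    (hap : ∀ i j, 0 < (A ^ M) i j) {m : ℕ} (hm : 1 ≤ m) (x : Space A)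
    (y' : Space A) :
    ∃ y : Space A, shift^[m + M] y = x ∧ ∀ i < m, y.1 i = y'.1 i := by
  set n := m + M with hn
  have hpos : 0 < (A ^ (M + 1)) (y'.1 (m - 1)) (x.1 0) := by
    rw [pow_succ', Matrix.mul_apply]
    have h1 : A (y'.1 (m - 1)) (y'.1 m) = 1 := by
      have := y'.2 (m - 1)
      rwa [Nat.sub_add_cancel hm] at this
    calc 0 < A (y'.1 (m - 1)) (y'.1 m) * (A ^ M) (y'.1 m) (x.1 0) := by
          rw [h1, one_mul]; exact hap _ _
      _ ≤ _ := Finset.single_le_sum (f := fun c => A (y'.1 (m-1)) c * (A ^ M) c (x.1 0))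
          (fun c _ => Nat.zero_le _) (Finset.mem_univ _)
  obtain ⟨v, hv0, hvM, hve⟩ := exists_path h01 hpos
  set w : ℕ → Fin s₀ := fun i =>
    if i < m then y'.1 i else if i < n then v (i - (m - 1)) else x.1 (i - n) with hw
  have hwlt : ∀ i < m, w i = y'.1 i := fun i hi => by simp [hw, hi]
  have hwmid : ∀ i, m - 1 ≤ i → i ≤ n → w i = v (i - (m - 1)) := by
    intro i h1 h2
    rcases Nat.lt_or_ge i m with hi | hi
    · have : i = m - 1 := by omega
      subst this
      rw [hwlt _ (by omega), Nat.sub_self, hv0]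
    · rcases Nat.lt_or_ge i n with hi2 | hi2
      · simp [hw, Nat.not_lt.mpr hi, hi2]
      · have hin : i = n := by omega
        have e0 : w i = x.1 0 := by
          simp only [hw]
          rw [if_neg (by omega : ¬ i < m), if_neg (by omega : ¬ i < n), hin, Nat.sub_self]
        have e1 : i - (m - 1) = M + 1 := by omega
        rw [e0, e1, hvM]
  have hwge : ∀ i, n ≤ i → w i = x.1 (i - n) := by
    intro i hi
    rcases Nat.lt_or_ge i n with h | h
    · omega
    · rcases Nat.eq_or_lt_of_le hi with he | hlt
      · rw [hwmid i (by omega) (by omega)]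
        have e1 : i - (m - 1) = M + 1 := by omega
        have e2 : i - n = 0 := by omega
        rw [e1, e2, hvM]
      · simp only [hw]
        rw [if_neg (by omega : ¬ i < m), if_neg (by omega : ¬ i < n)]
  have hadm : ∀ i, A (w i) (w (i + 1)) = 1 := by
    intro i
    rcases Nat.lt_or_ge (i + 1) m with hi | hi
    · rw [hwlt i (by omega), hwlt (i+1) hi]
      exact y'.2 i
    · rcases Nat.lt_or_ge i n with hi2 | hi2
      · rw [hwmid i (by omega) (by omega), hwmid (i+1) (by omega) (by omega)]
        have : (i + 1) - (m - 1) = (i - (m - 1)) + 1 := by omega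
        rw [this]
        exact hve _ (by omega)
      · rw [hwge i hi2, hwge (i+1) (by omega)]
        have : (i + 1) - n = (i - n) + 1 := by omega
        rw [this]
        exact x.2 _
  refine ⟨⟨w, hadm⟩, ?_, fun i hi => hwlt i hi⟩
  apply Subtype.ext
  funext i
  refine (shift_iterate _ n i).trans ?_
  have := hwge (i + n) (by omega)
  rwa [Nat.add_sub_cancel] at this

theorem statement3
    {s₀ M : ℕ} {A : Matrix (Fin s₀) (Fin s₀) ℕ} {θ : ℝ}
    (hs₀ : 2 ≤ s₀) (h01 : ∀ i j, A i j = 0 ∨ A i j = 1) (hM : 0 < M)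
    (hap : ∀ i j, 0 < (A ^ M) i j) (hθ0 : 0 < θ) (hθ1 : θ < 1)
    (f : Space A → ℝ) (hf : MemF θ f)
    (lam : ℝ) (ν : Measure (Space A)) (h : Space A → ℝ) (hRPF : IsRPF θ f lam ν h) :
    sInf (Set.range h) ≥
      1 / (Real.exp (2 * max 1 (holderNorm θ f) / (1 - θ)) * (s₀ : ℝ) ^ M *
        Real.exp (2 * (M : ℝ) * supNorm f)) := by
  obtain ⟨hlam, hprob, hdual, hmemh, hpos, heig, hint⟩ := hRPF
  haveI := hprob
  haveI hne : Nonempty (Space A) := space_nonempty h01 hM hap hs₀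
  have hcont : Continuous h := continuous_of_memF hθ0 hθ1 hmemh
  obtain ⟨z, -, hzmax'⟩ := isCompact_univ.exists_isMaxOn Set.univ_nonempty hcont.continuousOn
  have hzmax : ∀ y, h y ≤ h z := fun y => hzmax' (Set.mem_univ y)
  obtain ⟨xm, -, hxmin'⟩ := isCompact_univ.exists_isMinOn Set.univ_nonempty hcont.continuousOn
  have hxmin : ∀ y, h xm ≤ h y := fun y => hxmin' (Set.mem_univ y)
  set δ := h xm with hδdef
  have hδ : 0 < δ := hpos xm
  have hδle : ∀ y, δ ≤ h y := fun y => hxmin y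
  have hinteg : Integrable h ν := Integrable.mono' (integrable_const (h z))
    hcont.aestronglyMeasurable
    (Filter.Eventually.of_forall fun y => by
      rw [Real.norm_eq_abs, abs_of_pos (hpos y)]; exact hzmax y)
  have hz1 : (1:ℝ) ≤ h z := by
    have h1 : ∫ x, h x ∂ν ≤ ∫ _, h z ∂ν :=
      integral_mono hinteg (integrable_const _) fun y => hzmax y
    rw [hint, integral_const, probReal_univ] at h1
    simpa using h1
  set C := 2 * max 1 (holderNorm θ f) / (1 - θ) + 2 * (M : ℝ) * supNorm f with hCdef
  have key : ∀ (x : Space A) (m : ℕ),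
      h z ≤ Real.exp C * (s₀ : ℝ) ^ M * ((1 + holderNorm θ h * θ ^ m / δ) * h x) := by
    intro x m
    classical
    set mm := m + 1 with hmm
    set n := mm + M with hn
    haveI : Fintype {y' : Space A // shift^[n] y' = z} := Fintype.ofFinite _
    haveI : Fintype {y : Space A // shift^[n] y = x} := Fintype.ofFinite _
    have hm1 : 1 ≤ mm := Nat.le_add_left 1 m
    let Φ : {y' : Space A // shift^[n] y' = z} → {y : Space A // shift^[n] y = x} :=
      fun y' => ⟨(exists_image h01 hM hap hm1 x y'.1).choose,
        (exists_image h01 hM hap hm1 x y'.1).choose_spec.1⟩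
    have hΦ : ∀ y' : {y' : Space A // shift^[n] y' = z}, ∀ i < mm, (Φ y').1.1 i = y'.1.1 i :=
      fun y' => (exists_image h01 hM hap hm1 x y'.1).choose_spec.2
    have hεnn : 0 ≤ holderNorm θ h * θ ^ m :=
      mul_nonneg ENNReal.toReal_nonneg (pow_nonneg hθ0.le m)
    have hhb : ∀ y' : {y' : Space A // shift^[n] y' = z},
        h y'.1 ≤ (1 + holderNorm θ h * θ ^ m / δ) * h (Φ y').1 := by
      intro y'
      have hvar : |h y'.1 - h (Φ y').1| ≤ holderNorm θ h * θ ^ m :=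
        var_le_holderNorm hθ0 hmemh (fun i hi => (hΦ y' i (by omega)).symm)
      have h1 : h y'.1 ≤ h (Φ y').1 + holderNorm θ h * θ ^ m := by
        have := (abs_le.mp hvar).2
        linarith
      have h2 : holderNorm θ h * θ ^ m ≤ holderNorm θ h * θ ^ m / δ * h (Φ y').1 := by
        rw [div_mul_eq_mul_div, le_div_iff₀ hδ]
        exact mul_le_mul_of_nonneg_left (hδle _) hεnn
      rw [add_mul, one_mul]
      linarith
    have hgeo : ∑ t ∈ Finset.range mm, θ ^ t ≤ 1 / (1 - θ) := by
      rw [one_div]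
      exact (Summable.sum_le_tsum (Finset.range mm) (fun i _ => pow_nonneg hθ0.le i)
        (summable_geometric_of_lt_one hθ0.le hθ1)).trans_eq
        (tsum_geometric_of_lt_one hθ0.le hθ1)
    have hfθnn : 0 ≤ holderNorm θ f := ENNReal.toReal_nonneg
    have hsupnn : 0 ≤ supNorm f := ENNReal.toReal_nonneg
    have hbirk : ∀ y' : {y' : Space A // shift^[n] y' = z},
        birk f n y'.1 ≤ birk f n (Φ y').1 + C := by
      intro y'
      have hsplit : birk f n y'.1 - birk f n (Φ y').1
          = ∑ j ∈ Finset.range n, (f (shift^[j] y'.1) - f (shift^[j] (Φ y').1)) := by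
        rw [birk, birk, Finset.sum_sub_distrib]
      have hterm1 : ∀ j < mm, f (shift^[j] y'.1) - f (shift^[j] (Φ y').1)
          ≤ holderNorm θ f * θ ^ (m - j) := by
        intro j hj
        have hvar : |f (shift^[j] y'.1) - f (shift^[j] (Φ y').1)|
            ≤ holderNorm θ f * θ ^ (m - j) :=
          var_le_holderNorm hθ0 hf (fun i hi => by
            rw [shift_iterate, shift_iterate]
            exact ((hΦ y') (i + j) (by omega)).symm)
        exact (le_abs_self _).trans hvar
      have hterm2 : ∀ j, f (shift^[j] y'.1) - f (shift^[j] (Φ y').1) ≤ 2 * supNorm f := by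
        intro j
        have h1 := abs_le.mp (abs_le_supNorm hf (shift^[j] y'.1))
        have h2 := abs_le.mp (abs_le_supNorm hf (shift^[j] (Φ y').1))
        linarith [h1.2, h2.1]
      have hsum : ∑ j ∈ Finset.range n, (f (shift^[j] y'.1) - f (shift^[j] (Φ y').1)) ≤ C := by
        rw [Finset.range_eq_Ico,
          ← Finset.sum_Ico_consecutive _ (Nat.zero_le mm) (by omega : mm ≤ n)]
        have hA : ∑ j ∈ Finset.Ico 0 mm, (f (shift^[j] y'.1) - f (shift^[j] (Φ y').1))
            ≤ 2 * max 1 (holderNorm θ f) / (1 - θ) := by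
          calc ∑ j ∈ Finset.Ico 0 mm, (f (shift^[j] y'.1) - f (shift^[j] (Φ y').1))
              ≤ ∑ j ∈ Finset.Ico 0 mm, holderNorm θ f * θ ^ (m - j) :=
                Finset.sum_le_sum fun j hj => hterm1 j (Finset.mem_Ico.mp hj).2
            _ = holderNorm θ f * ∑ j ∈ Finset.range mm, θ ^ (m - j) := by
                rw [← Finset.range_eq_Ico, Finset.mul_sum]
            _ = holderNorm θ f * ∑ t ∈ Finset.range mm, θ ^ t := by
                rw [← Finset.sum_range_reflect (fun t => θ ^ t) mm]
                simp only [hmm, Nat.add_sub_cancel]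
            _ ≤ holderNorm θ f * (1 / (1 - θ)) :=
                mul_le_mul_of_nonneg_left hgeo hfθnn
            _ ≤ 2 * max 1 (holderNorm θ f) / (1 - θ) := by
                rw [mul_one_div]
                have hb2 : holderNorm θ f ≤ 2 * max 1 (holderNorm θ f) := by
                  have := le_max_right 1 (holderNorm θ f)
                  linarith
                have h1θ : (0:ℝ) < 1 - θ := by linarith
                rw [div_le_div_iff₀ h1θ h1θ]
                nlinarith
        have hB : ∑ j ∈ Finset.Ico mm n, (f (shift^[j] y'.1) - f (shift^[j] (Φ y').1))
            ≤ 2 * (M : ℝ) * supNorm f := by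
          calc ∑ j ∈ Finset.Ico mm n, (f (shift^[j] y'.1) - f (shift^[j] (Φ y').1))
              ≤ ∑ _j ∈ Finset.Ico mm n, 2 * supNorm f :=
                Finset.sum_le_sum fun j _ => hterm2 j
            _ = (M : ℝ) * (2 * supNorm f) := by
                rw [Finset.sum_const, Nat.card_Ico]
                have : n - mm = M := by omega
                rw [this, nsmul_eq_mul]
            _ = 2 * (M : ℝ) * supNorm f := by ring
        rw [hCdef]
        linarith
      linarith [hsplit ▸ hsum]
    have hpt : ∀ y' : {y' : Space A // shift^[n] y' = z},
        Real.exp (birk f n y'.1) * h y'.1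
          ≤ Real.exp C * ((1 + holderNorm θ h * θ ^ m / δ) *
              (Real.exp (birk f n (Φ y').1) * h (Φ y').1)) := by
      intro y'
      have he : Real.exp (birk f n y'.1) ≤ Real.exp C * Real.exp (birk f n (Φ y').1) := by
        rw [← Real.exp_add]
        exact Real.exp_le_exp.mpr (by linarith [hbirk y'])
      calc Real.exp (birk f n y'.1) * h y'.1
          ≤ (Real.exp C * Real.exp (birk f n (Φ y').1)) *
              ((1 + holderNorm θ h * θ ^ m / δ) * h (Φ y').1) :=
            mul_le_mul he (hhb y') (hpos _).le (by positivity)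
        _ = Real.exp C * ((1 + holderNorm θ h * θ ^ m / δ) *
              (Real.exp (birk f n (Φ y').1) * h (Φ y').1)) := by ring
    have htail : ∀ (y' : {y' : Space A // shift^[n] y' = z}) (i : ℕ), n ≤ i →
        y'.1.1 i = z.1 (i - n) := by
      intro y' i hi
      have hc := congrArg (fun w : Space A => w.1 (i - n)) y'.2
      have hc : y'.1.1 (i - n + n) = z.1 (i - n) := (shift_iterate y'.1 n (i - n)).symm.trans hc
      have hin : i - n + n = i := by omega
      rw [hin] at hc
      exact hc
    let G : {y : Space A // shift^[n] y = x} → ℝ := fun y => Real.exp (birk f n y.1) * h y.1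
    have hGnn : ∀ y, 0 ≤ G y := fun y => mul_nonneg (Real.exp_pos _).le (hpos _).le
    let Ψ : {y' : Space A // shift^[n] y' = z} →
        {y : Space A // shift^[n] y = x} × (Fin M → Fin s₀) :=
      fun y' => (Φ y', fun j => y'.1.1 (mm + j))
    have hΨinj : Function.Injective Ψ := by
      intro y₁ y₂ hΨeq
      have h1 : Φ y₁ = Φ y₂ := congrArg Prod.fst hΨeq
      have h2 : ∀ j : Fin M, y₁.1.1 (mm + j) = y₂.1.1 (mm + j) :=
        fun j => congrFun (congrArg Prod.snd hΨeq) j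
      apply Subtype.ext
      apply Subtype.ext
      funext i
      rcases Nat.lt_or_ge i mm with hi | hi
      · rw [← hΦ y₁ i hi, ← hΦ y₂ i hi, h1]
      · rcases Nat.lt_or_ge i n with hi2 | hi2
        · have hival : ((⟨i - mm, by omega⟩ : Fin M) : ℕ) = i - mm := rfl
          have hj : i = mm + ((⟨i - mm, by omega⟩ : Fin M) : ℕ) := by rw [hival]; omega
          rw [hj]
          exact h2 _
        · rw [htail y₁ i hi2, htail y₂ i hi2]
    have hcount : ∑ y' : {y' : Space A // shift^[n] y' = z}, G (Φ y')
        ≤ (s₀ : ℝ) ^ M * ∑ y : {y : Space A // shift^[n] y = x}, G y := by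
      have h1 : ∑ y' : {y' : Space A // shift^[n] y' = z}, G (Φ y')
          = ∑ p ∈ Finset.univ.image Ψ, G p.1 := by
        rw [Finset.sum_image (fun a _ b _ hab => hΨinj hab)]
      have h2 : ∑ p ∈ Finset.univ.image Ψ, G p.1
          ≤ ∑ p : {y : Space A // shift^[n] y = x} × (Fin M → Fin s₀), G p.1 :=
        Finset.sum_le_sum_of_subset_of_nonneg (Finset.subset_univ _) (fun p _ _ => hGnn p.1)
      have h3 : ∑ p : {y : Space A // shift^[n] y = x} × (Fin M → Fin s₀), G p.1
          = (s₀ : ℝ) ^ M * ∑ y : {y : Space A // shift^[n] y = x}, G y := by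
        rw [Fintype.sum_prod_type]
        have h4 : ∀ y : {y : Space A // shift^[n] y = x},
            ∑ _v : Fin M → Fin s₀, G y = (s₀ : ℝ) ^ M * G y := by
          intro y
          rw [Finset.sum_const, Finset.card_univ, nsmul_eq_mul]
          congr 1
          rw [Fintype.card_fun]
          push_cast
          simp
        rw [Finset.sum_congr rfl (fun y _ => h4 y), ← Finset.mul_sum]
      rw [h1]
      exact h2.trans h3.le
    have hsumz : lam ^ n * h z
        = ∑ y' : {y' : Space A // shift^[n] y' = z}, Real.exp (birk f n y'.1) * h y'.1 := by
      rw [transfer_iterate heig n z, tsum_eq_sum (s := Finset.univ) (by simp)]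
    have hsumx : ∑ y : {y : Space A // shift^[n] y = x}, G y = lam ^ n * h x := by
      rw [transfer_iterate heig n x, tsum_eq_sum (s := Finset.univ) (by simp)]
    have h1δ : (0:ℝ) ≤ 1 + holderNorm θ h * θ ^ m / δ := by positivity
    have hchain : lam ^ n * h z
        ≤ lam ^ n * (Real.exp C * (s₀ : ℝ) ^ M * ((1 + holderNorm θ h * θ ^ m / δ) * h x)) := by
      calc lam ^ n * h z
          = ∑ y' : {y' : Space A // shift^[n] y' = z}, Real.exp (birk f n y'.1) * h y'.1 :=
            hsumz
        _ ≤ ∑ y' : {y' : Space A // shift^[n] y' = z},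
              Real.exp C * ((1 + holderNorm θ h * θ ^ m / δ) * G (Φ y')) :=
            Finset.sum_le_sum fun y' _ => hpt y'
        _ = Real.exp C * ((1 + holderNorm θ h * θ ^ m / δ)
              * ∑ y' : {y' : Space A // shift^[n] y' = z}, G (Φ y')) := by
            rw [← Finset.mul_sum, ← Finset.mul_sum]
        _ ≤ Real.exp C * ((1 + holderNorm θ h * θ ^ m / δ)
              * ((s₀ : ℝ) ^ M * ∑ y : {y : Space A // shift^[n] y = x}, G y)) := by
            refine mul_le_mul_of_nonneg_left (mul_le_mul_of_nonneg_left hcount h1δ)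
              (Real.exp_pos _).le
        _ = lam ^ n * (Real.exp C * (s₀ : ℝ) ^ M
              * ((1 + holderNorm θ h * θ ^ m / δ) * h x)) := by
            rw [hsumx]
            ring
    exact le_of_mul_le_mul_left hchain (pow_pos hlam n)
  have main : ∀ x : Space A, 1 ≤ Real.exp C * (s₀ : ℝ) ^ M * h x := by
    intro x
    have h0 : Filter.Tendsto (fun m : ℕ => θ ^ m) Filter.atTop (nhds 0) :=
      tendsto_pow_atTop_nhds_zero_of_lt_one hθ0.le hθ1
    have ht : Filter.Tendsto
        (fun m : ℕ => Real.exp C * (s₀ : ℝ) ^ M * ((1 + holderNorm θ h * θ ^ m / δ) * h x))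
        Filter.atTop
        (nhds (Real.exp C * (s₀ : ℝ) ^ M * ((1 + holderNorm θ h * 0 / δ) * h x))) := by
      exact ((((h0.const_mul (holderNorm θ h)).div_const δ).const_add 1).mul_const
        (h x)).const_mul _
    have hle : h z ≤ Real.exp C * (s₀ : ℝ) ^ M * ((1 + holderNorm θ h * 0 / δ) * h x) :=
      ge_of_tendsto ht (Filter.Eventually.of_forall fun m => key x m)
    calc (1:ℝ) ≤ h z := hz1
      _ ≤ _ := hle
      _ = Real.exp C * (s₀ : ℝ) ^ M * h x := by ring
  have hden : 0 < Real.exp C * (s₀ : ℝ) ^ M := by positivity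
  refine le_csInf (Set.range_nonempty h) ?_
  rintro r ⟨x, rfl⟩
  have hx : 1 / (Real.exp C * (s₀ : ℝ) ^ M) ≤ h x := by
    rw [div_le_iff₀ hden]
    calc (1:ℝ) ≤ Real.exp C * (s₀ : ℝ) ^ M * h x := main x
      _ = h x * (Real.exp C * (s₀:ℝ) ^ M) := by ring
  refine le_trans (le_of_eq ?_) hx
  rw [hCdef, Real.exp_add]
  ring

end SFT
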